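/- Let the min-plus convolution reduction from Pareto sum be applied, producing monotone array C. If C[k] = A[i] + B[j] with i+j = k where (i, A[i]) corresponds to a point dominated in P (i.e., (i, A[i]) ∉ P but some p ∈ P has p.x < i and p.y = A[i]), then there exists k' < k with C[k'] ≤ C[k]; hence (k, C[k]) is pruned by the rule 'keep (k, C[k]) iff k = 0 or C[k] < C[k-1]'. -/
import Mathlib


/-- In the reduction, if `C[k] = A[i] + B[j]` with `i + j = k` where
`(i, A[i]) ∉ P` but some `p ∈ P` has `p.x < i` and `p.y = A[i]`, then some `k' < k`
has `C[k'] ≤ C[k]`; hence `(k, C[k])` is pruned by the rule keeping `(k, C[k])`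
iff `k = 0` or `C[k] < C[k-1]`. -/
theorem dominated_entry_is_pruned (W : ℤ) (hW : 0 ≤ W)
    (P Q : Set (ℤ × ℤ))
    (hPW : ∀ p ∈ P, 0 ≤ p.1 ∧ p.1 ≤ W ∧ 0 ≤ p.2 ∧ p.2 ≤ W)
    (hQW : ∀ q ∈ Q, 0 ≤ q.1 ∧ q.1 ≤ W ∧ 0 ≤ q.2 ∧ q.2 ≤ W)
    (A B : ℤ → ℤ)
    (hA : ∀ i : ℤ, 0 ≤ i → i ≤ W →
      (((∃ p ∈ P, p.1 ≤ i) →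
        (∃ p ∈ P, p.1 ≤ i ∧ A i = p.2) ∧ (∀ p ∈ P, p.1 ≤ i → A i ≤ p.2)) ∧
       ((∀ p ∈ P, ¬ p.1 ≤ i) → A i = W + 1)))
    (hB : ∀ i : ℤ, 0 ≤ i → i ≤ W →
      (((∃ q ∈ Q, q.1 ≤ i) →
        (∃ q ∈ Q, q.1 ≤ i ∧ B i = q.2) ∧ (∀ q ∈ Q, q.1 ≤ i → B i ≤ q.2)) ∧
       ((∀ q ∈ Q, ¬ q.1 ≤ i) → B i = W + 1)))
    (C : ℤ → ℤ)
    (hC : ∀ k : ℤ, 0 ≤ k → k ≤ 2 * W →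
      IsLeast {v : ℤ | ∃ i j : ℤ, 0 ≤ i ∧ i ≤ W ∧ 0 ≤ j ∧ j ≤ W ∧ i + j = k ∧ v = A i + B j}
        (C k))
    (hCmono : ∀ k k' : ℤ, 0 ≤ k' → k' ≤ k → k ≤ 2 * W → C k ≤ C k')
    (i j : ℤ) (hi0 : 0 ≤ i) (hiW : i ≤ W) (hj0 : 0 ≤ j) (hjW : j ≤ W)
    (hval : C (i + j) = A i + B j)
    (hnotP : (i, A i) ∉ P)
    (hdomP : ∃ p ∈ P, p.1 < i ∧ p.2 = A i) :
    (∃ k' : ℤ, 0 ≤ k' ∧ k' < i + j ∧ C k' ≤ C (i + j)) ∧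
    ¬(i + j = 0 ∨ C (i + j) < C (i + j - 1)) := by
  obtain ⟨p, hpP, hpx, hpy⟩ := hdomP
  have hp0 : 0 ≤ p.1 := (hPW p hpP).1
  have hi1 : 1 ≤ i := by omega
  have hA1 : A (i-1) ≤ A i := by
    have := ((hA (i-1) (by omega) (by omega)).1 ⟨p, hpP, by omega⟩).2 p hpP (by omega)
    omega
  have hmem : A (i-1) + B j ∈ {v : ℤ | ∃ i' j' : ℤ, 0 ≤ i' ∧ i' ≤ W ∧ 0 ≤ j' ∧ j' ≤ W ∧ i' + j' = i + j - 1 ∧ v = A i' + B j'} := ⟨i-1, j, by omega, by omega, hj0, hjW, by omega, rfl⟩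
  have hCle : C (i+j-1) ≤ A (i-1) + B j := (hC (i+j-1) (by omega) (by omega)).2 hmem
  have hkey : C (i+j-1) ≤ C (i+j) := by rw [hval]; omega
  exact ⟨⟨i+j-1, by omega, by omega, hkey⟩, by omega⟩
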